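/- Let P be the orthogonal projector onto range(A) for a real m×n matrix A of rank n, and let ΔA be any m×n matrix with ‖ΔA‖₂‖A†‖₂ < 1. Define M = A + P ΔA. Then rank(M) = n and range(M) = range(A), so A and M have the same leverage scores. -/

import Mathlib

open Matrix

/-- Spectral (two-)norm of a real rectangular matrix. -/
noncomputable def spec {m n : ℕ} (A : Matrix (Fin m) (Fin n) ℝ) : ℝ :=
  ‖LinearMap.toContinuousLinearMap (Matrix.toEuclideanLin A)‖

/-- Frobenius norm. -/
noncomputable def frob {m n : ℕ} (A : Matrix (Fin m) (Fin n) ℝ) : ℝ :=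
  Real.sqrt (∑ i, ∑ j, (A i j) ^ 2)

/-- Leverage score: squared Euclidean norm of the j-th row. -/
noncomputable def lev {m n : ℕ} (Q : Matrix (Fin m) (Fin n) ℝ) (j : Fin m) : ℝ :=
  ∑ k, (Q j k) ^ 2

/-- Euclidean norm of the j-th row. -/
noncomputable def rnorm {m n : ℕ} (A : Matrix (Fin m) (Fin n) ℝ) (j : Fin m) : ℝ :=
  Real.sqrt (∑ k, (A j k) ^ 2)

/-- Moore–Penrose inverse of a full column rank matrix. -/
noncomputable def pinv {m n : ℕ} (A : Matrix (Fin m) (Fin n) ℝ) : Matrix (Fin n) (Fin m) ℝ :=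
  (Aᵀ * A)⁻¹ * Aᵀ


lemma spec_bound {p q : ℕ} (C : Matrix (Fin p) (Fin q) ℝ) (v : EuclideanSpace ℝ (Fin q)) :
    ‖Matrix.toEuclideanLin C v‖ ≤ spec C * ‖v‖ := by
  simpa [spec] using (LinearMap.toContinuousLinearMap (Matrix.toEuclideanLin C)).le_opNorm v

lemma isUnit_of_mulVec_ker {k : ℕ} (N : Matrix (Fin k) (Fin k) ℝ)
    (h : ∀ v, N *ᵥ v = 0 → v = 0) : IsUnit N := by
  apply Matrix.mulVec_injective_iff_isUnit.mp
  intro v w hvw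
  have := h (v - w) (by rw [Matrix.mulVec_sub, hvw, sub_self])
  exact sub_eq_zero.mp this


theorem stmt18 {m n : ℕ} (A ΔA : Matrix (Fin m) (Fin n) ℝ)
    (hA : A.rank = n) (h : spec ΔA * spec (pinv A) < 1) :
    (A + A * pinv A * ΔA).rank = n ∧
    LinearMap.range (A + A * pinv A * ΔA).mulVecLin = LinearMap.range A.mulVecLin ∧
    ∀ j, ((A + A * pinv A * ΔA) * pinv (A + A * pinv A * ΔA)) j j = (A * pinv A) j j := by
  have hAinj : Function.Injective A.mulVecLin := by
    rw [← LinearMap.ker_eq_bot]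
    have h1 := A.mulVecLin.finrank_range_add_finrank_ker
    rw [show Module.finrank ℝ (Fin n → ℝ) = n by simp] at h1
    have h2 : Matrix.rank A = Module.finrank ℝ (LinearMap.range A.mulVecLin) := rfl
    rw [hA] at h2
    have hker : Module.finrank ℝ (LinearMap.ker A.mulVecLin) = 0 := by omega
    exact Submodule.finrank_eq_zero.mp hker
  have hAtA : IsUnit (Aᵀ * A) := by
    apply isUnit_of_mulVec_ker
    intro v hv
    have h1 : A *ᵥ v = 0 := by
      rw [← A.conjTranspose_mul_self_mulVec_eq_zero, conjTranspose_eq_transpose_of_trivial]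
      exact hv
    have : A.mulVecLin v = A.mulVecLin 0 := by simpa [Matrix.mulVecLin_apply] using h1
    exact hAinj this
  set B := pinv A with hB
  set N : Matrix (Fin n) (Fin n) ℝ := 1 + B * ΔA with hNdef
  have hN : IsUnit N := by
    apply isUnit_of_mulVec_ker
    intro v hv
    set w : EuclideanSpace ℝ (Fin n) := (WithLp.equiv 2 (Fin n → ℝ)).symm v with hw
    have hXv : (B * ΔA) *ᵥ v = -v := by
      have h0 : v + (B * ΔA) *ᵥ v = 0 := by
        simpa [hNdef, Matrix.add_mulVec, Matrix.one_mulVec] using hv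
      exact eq_neg_of_add_eq_zero_right h0
    have h1 : Matrix.toEuclideanLin (B * ΔA) w = -w := by
      rw [hw, WithLp.equiv_symm_apply, Matrix.toEuclideanLin_apply_piLp_toLp, hXv]
      rfl
    have h2 : Matrix.toEuclideanLin (B * ΔA) w
        = Matrix.toEuclideanLin B (Matrix.toEuclideanLin ΔA w) := by
      simp [Matrix.toEuclideanLin_apply, Matrix.mulVec_mulVec]
    have hBnn : (0:ℝ) ≤ spec B := norm_nonneg _
    have hnorm : ‖w‖ ≤ (spec ΔA * spec B) * ‖w‖ := by
      calc ‖w‖ = ‖Matrix.toEuclideanLin (B * ΔA) w‖ := by rw [h1, norm_neg]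
        _ = ‖Matrix.toEuclideanLin B (Matrix.toEuclideanLin ΔA w)‖ := by rw [h2]
        _ ≤ spec B * ‖Matrix.toEuclideanLin ΔA w‖ := spec_bound _ _
        _ ≤ spec B * (spec ΔA * ‖w‖) :=
            mul_le_mul_of_nonneg_left (spec_bound ΔA w) hBnn
        _ = (spec ΔA * spec B) * ‖w‖ := by ring
    have hwz : ‖w‖ = 0 := by nlinarith [norm_nonneg w]
    have hw0 : w = 0 := norm_eq_zero.mp hwz
    simpa [hw] using congrArg (WithLp.equiv 2 (Fin n → ℝ)) hw0
  have hNdet : IsUnit N.det := (Matrix.isUnit_iff_isUnit_det N).mp hN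
  have hM : A + A * pinv A * ΔA = A * N := by
    rw [hNdef, Matrix.mul_add, Matrix.mul_one, Matrix.mul_assoc, hB]
  refine ⟨?_, ?_, ?_⟩
  · rw [hM]
    rw [Matrix.rank_mul_eq_left_of_isUnit_det N A hNdet]
    exact hA
  · rw [hM, Matrix.mulVecLin_mul]
    apply LinearMap.range_comp_of_range_eq_top
    rw [LinearMap.range_eq_top]
    have := Matrix.mulVec_surjective_iff_isUnit.mpr hN
    exact this
  · have hpinvM : pinv (A * N) = N⁻¹ * pinv A := by
      have ht : (A * N)ᵀ * (A * N) = (Nᵀ * (Aᵀ * A)) * N := by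
        rw [Matrix.transpose_mul]
        simp [Matrix.mul_assoc]
      have hNt : (Nᵀ)⁻¹ * (Nᵀ * Aᵀ) = Aᵀ := by
        rw [← Matrix.mul_assoc, Matrix.nonsing_inv_mul _ (by simpa using hNdet),
          Matrix.one_mul]
      rw [pinv, ht, Matrix.mul_inv_rev, Matrix.mul_inv_rev, Matrix.transpose_mul]
      simp only [Matrix.mul_assoc]
      rw [hNt]
      rfl
    intro j
    rw [hM, hpinvM, Matrix.mul_assoc A N, ← Matrix.mul_assoc N,
      Matrix.mul_nonsing_inv _ hNdet, Matrix.one_mul]
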